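/- Let T be a leafless, infinite, locally finite rooted tree on which the backward shift B is bounded on H^p_0(T). Then B is hypercyclic on H^p_0(T) if and only if γ(n) → ∞ as n → ∞. -/

import Mathlib

open scoped BigOperators
open Classical

/-- An infinite, locally finite rooted tree, presented combinatorially via a
parent function and a level (distance-to-root) function.  Every level is a
finite nonempty set of vertices. -/
structure HTree where
  V : Type
  root : V
  parent : V → V
  level : V → ℕ
  level_root : level root = 0
  root_of_level_zero : ∀ v, level v = 0 → v = root
  level_parent : ∀ v, v ≠ root → level (parent v) + 1 = level v
  finite_level : ∀ n : ℕ, {v : V | level v = n}.Finite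
  nonempty_level : ∀ n : ℕ, {v : V | level v = n}.Nonempty

namespace HTree

variable (T : HTree)

/-- The finite set of vertices at level `n`. -/
noncomputable def levelFinset (n : ℕ) : Finset T.V := (T.finite_level n).toFinset

/-- `γ(n)`, the number of vertices at level `n`. -/
noncomputable def gamma (n : ℕ) : ℕ := (T.levelFinset n).card

/-- The set of `m`-children of a vertex `v`. -/
noncomputable def nChildrenFinset (m : ℕ) (v : T.V) : Finset T.V :=
  (T.levelFinset (T.level v + m)).filter (fun w => T.parent^[m] w = v)

/-- `γ(m,v)`, the number of `m`-children of `v`. -/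
noncomputable def numNChildren (m : ℕ) (v : T.V) : ℕ := (T.nChildrenFinset m v).card

/-- The set of children of a vertex. -/
noncomputable def childrenFinset (v : T.V) : Finset T.V := T.nChildrenFinset 1 v

/-- `γ(1,v)`, the number of children of `v`. -/
noncomputable def numChildren (v : T.V) : ℕ := T.numNChildren 1 v

/-- `K(m,r)`, the maximal number of `m`-children among vertices at level `r`. -/
noncomputable def K (m r : ℕ) : ℕ := (T.levelFinset r).sup (fun v => T.numNChildren m v)

/-- `M_p^p(n,f)`, the `p`-th power of the `p`-th mean of `|f|` over level `n`. -/
noncomputable def Mpp (p : ℝ) (f : T.V → ℂ) (n : ℕ) : ℝ :=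
  (1 / (T.gamma n : ℝ)) * ∑ v ∈ T.levelFinset n, ‖f v‖ ^ p

/-- `M_p(n,f)`, the `p`-th mean of `|f|` over level `n`. -/
noncomputable def Mp (p : ℝ) (f : T.V → ℂ) (n : ℕ) : ℝ := (T.Mpp p f n) ^ (1 / p)

/-- Membership in the Hardy space `H^p(T)`. -/
def MemHp (p : ℝ) (f : T.V → ℂ) : Prop := ∃ C : ℝ, ∀ n : ℕ, T.Mp p f n ≤ C

/-- Membership in the little Hardy space `H^p_0(T)`. -/
def MemHp0 (p : ℝ) (f : T.V → ℂ) : Prop :=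
  Filter.Tendsto (T.Mp p f) Filter.atTop (nhds 0)

/-- The `H^p` norm, `sup_n M_p(n,f)`. -/
noncomputable def Hnorm (p : ℝ) (f : T.V → ℂ) : ℝ := ⨆ n : ℕ, T.Mp p f n

/-- The forward shift `(Sf)(v) = f(parent v)`, `(Sf)(root) = 0`. -/
noncomputable def S (f : T.V → ℂ) : T.V → ℂ := fun v => if v = T.root then 0 else f (T.parent v)

/-- The backward shift `(Bf)(v) = Σ_{w child of v} f(w)`. -/
noncomputable def B (f : T.V → ℂ) : T.V → ℂ := fun v => ∑ w ∈ T.childrenFinset v, f w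

/-- An operator `A` is bounded on the subspace described by `Mem`, with the
`H^p` norm. -/
def BoundedOn (A : (T.V → ℂ) → (T.V → ℂ)) (Mem : (T.V → ℂ) → Prop) (p : ℝ) : Prop :=
  ∃ C : ℝ, 0 ≤ C ∧ ∀ f, Mem f → Mem (A f) ∧ T.Hnorm p (A f) ≤ C * T.Hnorm p f

/-- The operator norm of `A` on the subspace described by `Mem`. -/
noncomputable def opNorm (A : (T.V → ℂ) → (T.V → ℂ)) (Mem : (T.V → ℂ) → Prop) (p : ℝ) : ℝ :=
  sInf {C : ℝ | 0 ≤ C ∧ ∀ f, Mem f → Mem (A f) ∧ T.Hnorm p (A f) ≤ C * T.Hnorm p f}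

/-- Hypercyclicity of an operator `A` on the subspace described by `Mem`. -/
def Hypercyclic (A : (T.V → ℂ) → (T.V → ℂ)) (Mem : (T.V → ℂ) → Prop) (p : ℝ) : Prop :=
  ∃ f, Mem f ∧ ∀ g, Mem g → ∀ ε : ℝ, 0 < ε →
    ∃ N : ℕ, T.Hnorm p (fun v => A^[N] f v - g v) < ε

end HTree
namespace HTree

variable (T : HTree)

lemma mem_levelFinset {v : T.V} {n : ℕ} : v ∈ T.levelFinset n ↔ T.level v = n := by
  simp [levelFinset, Set.Finite.mem_toFinset]

lemma levelFinset_nonempty (n : ℕ) : (T.levelFinset n).Nonempty := by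
  obtain ⟨v, hv⟩ := T.nonempty_level n
  exact ⟨v, T.mem_levelFinset.2 hv⟩

lemma gamma_pos (n : ℕ) : 0 < T.gamma n :=
  Finset.card_pos.2 (T.levelFinset_nonempty n)

lemma ne_root_of_level {v : T.V} (h : T.level v ≠ 0) : v ≠ T.root := by
  rintro rfl; exact h T.level_root

lemma level_parent_iter {m n : ℕ} {v : T.V} (h : T.level v = n + m) :
    T.level (T.parent^[m] v) = n := by
  induction m generalizing v with
  | zero => simpa using h
  | succ m ih =>
    have hv : v ≠ T.root := T.ne_root_of_level (by omega)
    have h2 : T.level (T.parent v) = n + m := by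
      have := T.level_parent v hv; omega
    rw [Function.iterate_succ_apply]
    exact ih h2

lemma mem_nChildrenFinset {m : ℕ} {v w : T.V} :
    w ∈ T.nChildrenFinset m v ↔ T.level w = T.level v + m ∧ T.parent^[m] w = v := by
  simp [nChildrenFinset, T.mem_levelFinset, and_comm]

lemma nChildrenFinset_zero (v : T.V) : T.nChildrenFinset 0 v = {v} := by
  ext w; simp [T.mem_nChildrenFinset]
  rintro rfl; rfl

lemma nChildrenFinset_root (m : ℕ) : T.nChildrenFinset m T.root = T.levelFinset m := by
  ext w
  simp only [T.mem_nChildrenFinset, T.mem_levelFinset, T.level_root, Nat.zero_add]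
  constructor
  · rintro ⟨h, -⟩; exact h
  · intro h
    refine ⟨h, T.root_of_level_zero _ ?_⟩
    exact T.level_parent_iter (by omega)

lemma sum_level_fiber {M : Type*} [AddCommMonoid M] (n m : ℕ) (F : T.V → M) :
    ∑ w ∈ T.levelFinset (n + m), F w
      = ∑ v ∈ T.levelFinset n, ∑ w ∈ T.nChildrenFinset m v, F w := by
  rw [← Finset.sum_fiberwise_of_maps_to (g := fun w => T.parent^[m] w)
    (t := T.levelFinset n) (fun w hw => T.mem_levelFinset.2
      (T.level_parent_iter (T.mem_levelFinset.1 hw))) F]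
  refine Finset.sum_congr rfl fun v hv => ?_
  have hv' : T.level v = n := T.mem_levelFinset.1 hv
  rw [nChildrenFinset, hv']

lemma nChildrenFinset_add (m a : ℕ) (u : T.V) :
    T.nChildrenFinset (m + a) u
      = (T.nChildrenFinset m u).biUnion (T.nChildrenFinset a) := by
  ext w
  simp only [Finset.mem_biUnion, T.mem_nChildrenFinset]
  constructor
  · intro ⟨hl, hp⟩
    refine ⟨T.parent^[a] w, ⟨?_, ?_⟩, ?_, rfl⟩
    · exact T.level_parent_iter (by omega)
    · rw [← Function.iterate_add_apply]; exact hp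
    · have : T.level (T.parent^[a] w) = T.level u + m := T.level_parent_iter (by omega)
      omega
  · rintro ⟨v, ⟨hvl, hvp⟩, hwl, hwp⟩
    constructor
    · omega
    · rw [Function.iterate_add_apply, hwp, hvp]

lemma numNChildren_add (m a : ℕ) (u : T.V) :
    T.numNChildren (m + a) u = ∑ v ∈ T.nChildrenFinset m u, T.numNChildren a v := by
  rw [numNChildren, T.nChildrenFinset_add m a u]
  rw [Finset.card_biUnion]
  · rfl
  · intro x hx y hy hxy
    refine Finset.disjoint_left.2 fun w hwx hwy => hxy ?_
    have h1 := (T.mem_nChildrenFinset.1 hwx).2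
    have h2 := (T.mem_nChildrenFinset.1 hwy).2
    rw [← h1, h2]

lemma B_iterate (N : ℕ) (f : T.V → ℂ) (v : T.V) :
    T.B^[N] f v = ∑ w ∈ T.nChildrenFinset N v, f w := by
  induction N generalizing f with
  | zero => simp [T.nChildrenFinset_zero]
  | succ N ih =>
    rw [Function.iterate_succ_apply, ih]
    have : (N : ℕ) + 1 = N + 1 := rfl
    rw [show N + 1 = N + 1 from rfl, T.nChildrenFinset_add N 1 v, Finset.sum_biUnion]
    · exact Finset.sum_congr rfl fun w _ => rfl
    · intro x hx y hy hxy
      refine Finset.disjoint_left.2 fun w hwx hwy => hxy ?_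
      have h1 := (T.mem_nChildrenFinset.1 hwx).2
      have h2 := (T.mem_nChildrenFinset.1 hwy).2
      simp only [Function.iterate_one] at h1 h2
      rw [← h1, h2]

end HTree
namespace HTree

variable (T : HTree)

lemma nChildrenFinset_nonempty (hleafless : ∀ v : T.V, T.numChildren v ≠ 0)
    (m : ℕ) (v : T.V) : (T.nChildrenFinset m v).Nonempty := by
  induction m with
  | zero => rw [T.nChildrenFinset_zero]; exact ⟨v, Finset.mem_singleton_self v⟩
  | succ m ih =>
    obtain ⟨w, hw⟩ := ih
    have hch : (T.nChildrenFinset 1 w).Nonempty :=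
      Finset.card_pos.1 (Nat.pos_of_ne_zero (hleafless w))
    obtain ⟨u, hu⟩ := hch
    obtain ⟨hwl, hwp⟩ := T.mem_nChildrenFinset.1 hw
    obtain ⟨hul, hup⟩ := T.mem_nChildrenFinset.1 hu
    rw [Function.iterate_one] at hup
    refine ⟨u, T.mem_nChildrenFinset.2 ⟨by omega, ?_⟩⟩
    rw [Function.iterate_succ_apply, hup, hwp]

lemma numNChildren_pos (hleafless : ∀ v : T.V, T.numChildren v ≠ 0) (m : ℕ) (v : T.V) :
    0 < T.numNChildren m v :=
  Finset.card_pos.2 (T.nChildrenFinset_nonempty hleafless m v)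

lemma gamma_mono (hleafless : ∀ v : T.V, T.numChildren v ≠ 0) : Monotone T.gamma := by
  refine monotone_nat_of_le_succ fun n => ?_
  have hc : ∀ v : T.V, ∃ u, u ∈ T.nChildrenFinset 1 v := fun v =>
    T.nChildrenFinset_nonempty hleafless 1 v
  choose c hc using hc
  refine Finset.card_le_card_of_injOn c (fun v hv => ?_) ?_
  · have := T.mem_nChildrenFinset.1 (hc v)
    exact T.mem_levelFinset.2 (by rw [this.1, T.mem_levelFinset.1 hv])
  · intro x _ y _ hxy
    have hx := (T.mem_nChildrenFinset.1 (hc x)).2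
    have hy := (T.mem_nChildrenFinset.1 (hc y)).2
    rw [Function.iterate_one] at hx hy
    rw [← hx, ← hy, hxy]

/-- The right-inverse operators `T_b`. -/
noncomputable def Tm (b : ℕ) (g : T.V → ℂ) : T.V → ℂ := fun v =>
  if b ≤ T.level v then g (T.parent^[b] v) / (T.numNChildren b (T.parent^[b] v) : ℂ) else 0

lemma Tm_eq_zero_of_lt {b : ℕ} {g : T.V → ℂ} {v : T.V} (h : T.level v < b) :
    T.Tm b g v = 0 := by
  rw [Tm, if_neg (by omega)]

lemma Tm_eq_zero_of_gt {b d : ℕ} {g : T.V → ℂ} (hg : ∀ v, d < T.level v → g v = 0)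
    {v : T.V} (h : b + d < T.level v) : T.Tm b g v = 0 := by
  rw [Tm]
  split
  · rw [hg _ (by
      have : T.level (T.parent^[b] v) = T.level v - b :=
        T.level_parent_iter (by omega)
      omega), zero_div]
  · rfl

lemma B_iterate_Tm (hleafless : ∀ v : T.V, T.numChildren v ≠ 0) (b : ℕ) (g : T.V → ℂ)
    (v : T.V) : T.B^[b] (T.Tm b g) v = g v := by
  rw [T.B_iterate]
  have h1 : ∀ w ∈ T.nChildrenFinset b v,
      T.Tm b g w = g v / (T.numNChildren b v : ℂ) := by
    intro w hw
    obtain ⟨hl, hp⟩ := T.mem_nChildrenFinset.1 hw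
    rw [Tm, if_pos (by omega), hp]
  rw [Finset.sum_congr rfl h1, Finset.sum_const, nsmul_eq_mul]
  rw [show (T.nChildrenFinset b v).card = T.numNChildren b v from rfl]
  rw [mul_div_cancel₀]
  exact Nat.cast_ne_zero.2 (T.numNChildren_pos hleafless b v).ne'

end HTree
namespace HTree

variable (T : HTree)

lemma sum_norm_rpow_nonneg {p : ℝ} (f : T.V → ℂ) (n : ℕ) :
    0 ≤ ∑ v ∈ T.levelFinset n, ‖f v‖ ^ p :=
  Finset.sum_nonneg fun v _ => Real.rpow_nonneg (norm_nonneg _) p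

lemma Mpp_nonneg {p : ℝ} (f : T.V → ℂ) (n : ℕ) : 0 ≤ T.Mpp p f n :=
  mul_nonneg (by positivity) (T.sum_norm_rpow_nonneg f n)

lemma Mp_nonneg {p : ℝ} (f : T.V → ℂ) (n : ℕ) : 0 ≤ T.Mp p f n :=
  Real.rpow_nonneg (T.Mpp_nonneg f n) _

lemma rpow_inv_rpow' {p x : ℝ} (hp : 0 < p) (hx : 0 ≤ x) : (x ^ p) ^ (1/p) = x := by
  rw [← Real.rpow_mul hx, mul_one_div, div_self hp.ne', Real.rpow_one]

lemma Mp_congr {p : ℝ} {f g : T.V → ℂ} {n : ℕ} (h : ∀ v, T.level v = n → f v = g v) :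
    T.Mp p f n = T.Mp p g n := by
  unfold Mp Mpp
  congr 2
  exact Finset.sum_congr rfl fun v hv => by rw [h v (T.mem_levelFinset.1 hv)]

lemma Mp_zero_fn {p : ℝ} (hp : 0 < p) (n : ℕ) : T.Mp p (fun _ => 0) n = 0 := by
  unfold Mp Mpp
  rw [Finset.sum_congr rfl fun v _ => by
    rw [norm_zero, Real.zero_rpow hp.ne']]
  rw [Finset.sum_const, smul_zero, mul_zero, Real.zero_rpow (one_div_ne_zero hp.ne')]

lemma Mp_eq_zero_of_zero {p : ℝ} (hp : 0 < p) {f : T.V → ℂ} {n : ℕ}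
    (h : ∀ v, T.level v = n → f v = 0) : T.Mp p f n = 0 := by
  rw [T.Mp_congr h]; exact T.Mp_zero_fn hp n

lemma Mp_le_of_Mpp_le {p a : ℝ} (hp : 0 < p) {f : T.V → ℂ} {n : ℕ} (h : T.Mpp p f n ≤ a) :
    T.Mp p f n ≤ a ^ (1/p) :=
  Real.rpow_le_rpow (T.Mpp_nonneg f n) h (by positivity)

lemma Mp_add_le {p : ℝ} (hp : 1 ≤ p) (f g : T.V → ℂ) (n : ℕ) :
    T.Mp p (fun v => f v + g v) n ≤ T.Mp p f n + T.Mp p g n := by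
  have hp0 : (0:ℝ) < p := lt_of_lt_of_le one_pos hp
  have hc : (0:ℝ) ≤ 1 / (T.gamma n : ℝ) := by positivity
  unfold Mp Mpp
  rw [Real.mul_rpow hc (T.sum_norm_rpow_nonneg _ n),
      Real.mul_rpow hc (T.sum_norm_rpow_nonneg _ n),
      Real.mul_rpow hc (T.sum_norm_rpow_nonneg _ n), ← mul_add]
  refine mul_le_mul_of_nonneg_left ?_ (Real.rpow_nonneg hc _)
  have h1 : (∑ v ∈ T.levelFinset n, ‖f v + g v‖ ^ p) ^ (1/p)
      ≤ (∑ v ∈ T.levelFinset n, |‖f v‖ + ‖g v‖| ^ p) ^ (1/p) := by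
    refine Real.rpow_le_rpow (T.sum_norm_rpow_nonneg _ n)
      (Finset.sum_le_sum fun v _ => ?_) (by positivity)
    refine Real.rpow_le_rpow (norm_nonneg _) ?_ hp0.le
    exact (norm_add_le _ _).trans (le_abs_self _)
  refine h1.trans ?_
  have h2 := Real.Lp_add_le (T.levelFinset n) (fun v => ‖f v‖) (fun v => ‖g v‖) hp
  simpa [abs_of_nonneg, norm_nonneg] using h2

lemma Mp_sum_le {p : ℝ} (hp : 1 ≤ p) {ι : Type*} (s : Finset ι) (F : ι → T.V → ℂ)
    (n : ℕ) : T.Mp p (fun v => ∑ i ∈ s, F i v) n ≤ ∑ i ∈ s, T.Mp p (F i) n := by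
  have hp0 : (0:ℝ) < p := lt_of_lt_of_le one_pos hp
  induction s using Finset.cons_induction with
  | empty => simp [T.Mp_zero_fn hp0]
  | cons a s ha ih =>
    simp only [Finset.sum_cons]
    calc T.Mp p (fun v => F a v + ∑ i ∈ s, F i v) n
        ≤ T.Mp p (F a) n + T.Mp p (fun v => ∑ i ∈ s, F i v) n := T.Mp_add_le hp _ _ n
      _ ≤ _ := add_le_add_right ih _

lemma sum_rpow_le_rpow_sum {p : ℝ} (hp : 1 ≤ p) {ι : Type*} (s : Finset ι) (x : ι → ℝ)
    (hx : ∀ i ∈ s, 0 ≤ x i) : ∑ i ∈ s, x i ^ p ≤ (∑ i ∈ s, x i) ^ p := by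
  have hp0 : (0:ℝ) < p := lt_of_lt_of_le one_pos hp
  have hs : 0 ≤ ∑ i ∈ s, x i := Finset.sum_nonneg hx
  rcases eq_or_lt_of_le hs with h0 | h0
  · have hz : ∀ i ∈ s, x i = 0 := (Finset.sum_eq_zero_iff_of_nonneg hx).1 h0.symm
    rw [Finset.sum_congr rfl fun i hi => by rw [hz i hi, Real.zero_rpow hp0.ne'],
      Finset.sum_const, smul_zero, ← h0, Real.zero_rpow hp0.ne']
  · calc ∑ i ∈ s, x i ^ p ≤ ∑ i ∈ s, (∑ j ∈ s, x j) ^ (p-1) * x i := by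
          refine Finset.sum_le_sum fun i hi => ?_
          rcases eq_or_lt_of_le (hx i hi) with h | h
          · rw [← h, Real.zero_rpow hp0.ne', mul_zero]
          · have hxp : x i ^ (p-1) * x i ^ (1:ℝ) = x i ^ p := by
              rw [← Real.rpow_add h]; norm_num
            rw [Real.rpow_one] at hxp
            rw [← hxp]
            refine mul_le_mul_of_nonneg_right ?_ (hx i hi)
            exact Real.rpow_le_rpow (hx i hi) (Finset.single_le_sum hx hi) (by linarith)
      _ = (∑ j ∈ s, x j) ^ (p-1) * ∑ i ∈ s, x i := by rw [← Finset.mul_sum]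
      _ = (∑ j ∈ s, x j) ^ p := by
          have hxp : (∑ j ∈ s, x j) ^ (p-1) * (∑ j ∈ s, x j) ^ (1:ℝ)
              = (∑ j ∈ s, x j) ^ p := by
            rw [← Real.rpow_add h0]; norm_num
          rw [Real.rpow_one] at hxp
          exact hxp

end HTree
namespace HTree

variable (T : HTree)

lemma sum_level_le_Sg {p : ℝ} (hp : 0 < p) {d : ℕ} {g : T.V → ℂ}
    (hg : ∀ v, d < T.level v → g v = 0) (s : ℕ) :
    ∑ u ∈ T.levelFinset s, ‖g u‖ ^ p
      ≤ ∑ j ∈ Finset.range (d+1), ∑ u ∈ T.levelFinset j, ‖g u‖ ^ p := by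
  by_cases hs : s ≤ d
  · exact Finset.single_le_sum (f := fun j => ∑ u ∈ T.levelFinset j, ‖g u‖ ^ p)
      (fun j _ => T.sum_norm_rpow_nonneg g j) (Finset.mem_range.2 (by omega))
  · calc ∑ u ∈ T.levelFinset s, ‖g u‖ ^ p = 0 := by
          refine Finset.sum_eq_zero fun u hu => ?_
          rw [hg u (by rw [T.mem_levelFinset.1 hu]; omega), norm_zero,
            Real.zero_rpow hp.ne']
      _ ≤ _ := Finset.sum_nonneg fun j _ => T.sum_norm_rpow_nonneg g j

lemma cross_bound (hleafless : ∀ v : T.V, T.numChildren v ≠ 0) {p : ℝ} (hp : 1 ≤ p)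
    (a b d : ℕ) (hab : a ≤ b) (g : T.V → ℂ) (hg : ∀ v, d < T.level v → g v = 0)
    (r : ℕ) :
    T.Mpp p (fun v => ∑ w ∈ T.nChildrenFinset a v, T.Tm b g w) r
      ≤ (∑ j ∈ Finset.range (d+1), ∑ u ∈ T.levelFinset j, ‖g u‖ ^ p)
          / (T.gamma (b - a) : ℝ) := by
  have hp0 : (0:ℝ) < p := lt_of_lt_of_le one_pos hp
  have hSg : 0 ≤ ∑ j ∈ Finset.range (d+1), ∑ u ∈ T.levelFinset j, ‖g u‖ ^ p :=
    Finset.sum_nonneg fun j _ => T.sum_norm_rpow_nonneg g j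
  set F : T.V → ℂ := fun v => ∑ w ∈ T.nChildrenFinset a v, T.Tm b g w with hF
  by_cases hcase : r + a < b
  · have hz : ∀ v ∈ T.levelFinset r, ‖F v‖ ^ p = 0 := by
      intro v hv
      have : F v = 0 := Finset.sum_eq_zero fun w hw => by
        obtain ⟨hl, -⟩ := T.mem_nChildrenFinset.1 hw
        exact T.Tm_eq_zero_of_lt (by rw [hl, T.mem_levelFinset.1 hv]; omega)
      rw [this, norm_zero, Real.zero_rpow hp0.ne']
    rw [Mpp, Finset.sum_congr rfl hz, Finset.sum_const, smul_zero, mul_zero]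
    positivity
  · push_neg at hcase
    set m := b - a with hm
    have hma : m + a = b := by omega
    have hmr : m ≤ r := by omega
    -- pointwise formula
    have hptw : ∀ u ∈ T.levelFinset (r - m), ∀ v ∈ T.nChildrenFinset m u,
        ‖F v‖ ^ p = (T.numNChildren a v : ℝ) ^ p
          * (‖g u‖ / (T.numNChildren b u : ℝ)) ^ p := by
      intro u hu v hv
      obtain ⟨hvl, hvp⟩ := T.mem_nChildrenFinset.1 hv
      have hFv : F v = (T.numNChildren a v : ℂ)
          * (g u / (T.numNChildren b u : ℂ)) := by
        have heq : ∀ w ∈ T.nChildrenFinset a v,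
            T.Tm b g w = g u / (T.numNChildren b u : ℂ) := by
          intro w hw
          obtain ⟨hwl, hwp⟩ := T.mem_nChildrenFinset.1 hw
          have hlw : b ≤ T.level w := by
            rw [hwl, hvl, T.mem_levelFinset.1 hu]; omega
          have hpar : T.parent^[b] w = u := by
            rw [← hma, Function.iterate_add_apply, hwp, hvp]
          rw [Tm, if_pos hlw, hpar]
        calc F v = ∑ _w ∈ T.nChildrenFinset a v, (g u / (T.numNChildren b u : ℂ)) :=
              Finset.sum_congr rfl heq
          _ = _ := by rw [Finset.sum_const, nsmul_eq_mul]; rfl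
      rw [hFv, norm_mul, norm_div]
      have h1 : ‖(T.numNChildren a v : ℂ)‖ = (T.numNChildren a v : ℝ) := by
        simp
      have h2 : ‖(T.numNChildren b u : ℂ)‖ = (T.numNChildren b u : ℝ) := by
        simp
      rw [h1, h2, Real.mul_rpow (Nat.cast_nonneg _) (by positivity)]
    -- sum over level r
    have hsum : ∑ v ∈ T.levelFinset r, ‖F v‖ ^ p
        ≤ ∑ u ∈ T.levelFinset (r - m), ‖g u‖ ^ p := by
      have hrw : T.levelFinset r = T.levelFinset ((r - m) + m) := by
        congr 1; omega
      rw [hrw, T.sum_level_fiber (r - m) m (fun v => ‖F v‖ ^ p)]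
      refine Finset.sum_le_sum fun u hu => ?_
      rw [Finset.sum_congr rfl (hptw u hu)]
      rw [← Finset.sum_mul]
      have hle : ∑ v ∈ T.nChildrenFinset m u, (T.numNChildren a v : ℝ) ^ p
          ≤ (T.numNChildren b u : ℝ) ^ p := by
        have := sum_rpow_le_rpow_sum hp (T.nChildrenFinset m u)
          (fun v => (T.numNChildren a v : ℝ)) (fun v _ => Nat.cast_nonneg _)
        refine this.trans ?_
        have hcast : ∑ v ∈ T.nChildrenFinset m u, (T.numNChildren a v : ℝ)
            = (T.numNChildren b u : ℝ) := by
          rw [← Nat.cast_sum, ← T.numNChildren_add m a u, hma]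
        rw [hcast]
      have hq : (0:ℝ) ≤ (‖g u‖ / (T.numNChildren b u : ℝ)) ^ p := by positivity
      calc (∑ v ∈ T.nChildrenFinset m u, (T.numNChildren a v : ℝ) ^ p)
            * (‖g u‖ / (T.numNChildren b u : ℝ)) ^ p
          ≤ (T.numNChildren b u : ℝ) ^ p
            * (‖g u‖ / (T.numNChildren b u : ℝ)) ^ p :=
            mul_le_mul_of_nonneg_right hle hq
        _ = ‖g u‖ ^ p := by
            rw [← Real.mul_rpow (Nat.cast_nonneg _) (by positivity)]
            congr 1
            rw [mul_div_cancel₀]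
            exact Nat.cast_ne_zero.2 (T.numNChildren_pos hleafless b u).ne'
    -- conclude
    have hγ : (T.gamma m : ℝ) ≤ (T.gamma r : ℝ) :=
      Nat.cast_le.2 (T.gamma_mono hleafless hmr)
    have hγm : (0:ℝ) < (T.gamma m : ℝ) := Nat.cast_pos.2 (T.gamma_pos m)
    calc T.Mpp p F r ≤ (1 / (T.gamma r : ℝ))
          * ∑ j ∈ Finset.range (d+1), ∑ u ∈ T.levelFinset j, ‖g u‖ ^ p := by
          refine mul_le_mul_of_nonneg_left ?_ (by positivity)
          exact hsum.trans (T.sum_level_le_Sg hp0 hg (r - m))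
      _ = (∑ j ∈ Finset.range (d+1), ∑ u ∈ T.levelFinset j, ‖g u‖ ^ p)
            / (T.gamma r : ℝ) := by rw [one_div, inv_mul_eq_div]
      _ ≤ _ := by
          have h1 : (0:ℝ) < (T.gamma (b - a) : ℝ) := Nat.cast_pos.2 (T.gamma_pos _)
          have h2 : (T.gamma (b - a) : ℝ) ≤ (T.gamma r : ℝ) :=
            Nat.cast_le.2 (T.gamma_mono hleafless (by omega))
          gcongr

end HTree
namespace HTree

variable (T : HTree)

lemma Mp_neg {p : ℝ} (f : T.V → ℂ) (n : ℕ) : T.Mp p (fun v => -f v) n = T.Mp p f n := by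
  unfold Mp Mpp
  congr 2
  exact Finset.sum_congr rfl fun v _ => by rw [norm_neg]

lemma Mp_sub_le {p : ℝ} (hp : 1 ≤ p) (f g : T.V → ℂ) (n : ℕ) :
    T.Mp p (fun v => f v - g v) n ≤ T.Mp p f n + T.Mp p g n := by
  have := T.Mp_add_le hp f (fun v => -g v) n
  simp only [T.Mp_neg g n] at this
  simpa [sub_eq_add_neg] using this

lemma levelFinset_zero : T.levelFinset 0 = {T.root} := by
  ext w
  simp only [T.mem_levelFinset, Finset.mem_singleton]
  exact ⟨fun h => T.root_of_level_zero w h, fun h => h ▸ T.level_root⟩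

lemma memHp0_bound {p : ℝ} {f : T.V → ℂ} (hf : T.MemHp0 p f) :
    ∃ M : ℝ, 0 ≤ M ∧ ∀ n, T.Mp p f n ≤ M := by
  obtain ⟨M, hM⟩ := hf.bddAbove_range
  refine ⟨M, le_trans (T.Mp_nonneg f 0) (hM ⟨0, rfl⟩), fun n => hM ⟨n, rfl⟩⟩

lemma memHp0_iterate {p : ℝ} (hb : T.BoundedOn T.B (T.MemHp0 p) p) {f : T.V → ℂ}
    (hf : T.MemHp0 p f) (N : ℕ) : T.MemHp0 p (T.B^[N] f) := by
  obtain ⟨C, -, hC⟩ := hb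
  induction N with
  | zero => exact hf
  | succ N ih => rw [Function.iterate_succ_apply']; exact (hC _ ih).1

lemma necessity {p : ℝ} (hp : 1 ≤ p) (hleafless : ∀ v : T.V, T.numChildren v ≠ 0)
    (hb : T.BoundedOn T.B (T.MemHp0 p) p)
    (hcyc : T.Hypercyclic T.B (T.MemHp0 p) p) :
    Filter.Tendsto (fun n : ℕ => T.gamma n) Filter.atTop Filter.atTop := by
  have hp0 : (0:ℝ) < p := lt_of_lt_of_le one_pos hp
  by_contra hnot
  rw [Filter.tendsto_atTop_atTop] at hnot
  push_neg at hnot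
  obtain ⟨b, hbnd⟩ := hnot
  have hbd : ∀ n, (T.gamma n : ℝ) ≤ b := by
    intro n
    obtain ⟨a, han, hab⟩ := hbnd n
    exact_mod_cast le_trans (Nat.cast_le.2 (T.gamma_mono hleafless han)) (le_of_lt
      (Nat.cast_lt.2 hab))
  have hb1 : (1:ℝ) ≤ (b:ℝ) := le_trans (by exact_mod_cast T.gamma_pos 0) (hbd 0)
  obtain ⟨f, hf, happrox⟩ := hcyc
  obtain ⟨Mf, hMf0, hMf⟩ := T.memHp0_bound hf
  set A : ℝ := (b:ℝ) * (b:ℝ) * Mf + 2 with hA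
  have hA0 : 0 ≤ A := by positivity
  set g : T.V → ℂ := fun v => if v = T.root then (A:ℂ) else 0 with hgdef
  have hg : T.MemHp0 p g := by
    have hzero : ∀ n : ℕ, 1 ≤ n → T.Mp p g n = 0 := by
      intro n hn
      refine T.Mp_eq_zero_of_zero hp0 fun v hv => ?_
      have hne : v ≠ T.root := T.ne_root_of_level (by rw [hv]; omega)
      simp only [hgdef, if_neg hne]
    unfold MemHp0
    refine Filter.Tendsto.congr' ?_ tendsto_const_nhds
    filter_upwards [Filter.eventually_atTop.2 ⟨1, fun n hn => (hzero n hn).symm⟩] with n h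
    exact h
  obtain ⟨N, hN⟩ := happrox g hg 1 one_pos
  set h : T.V → ℂ := fun v => T.B^[N] f v - g v with hhdef
  -- boundedness of Mp of h
  have hmemB : T.MemHp0 p (T.B^[N] f) := T.memHp0_iterate hb hf N
  obtain ⟨MB, hMB0, hMB⟩ := T.memHp0_bound hmemB
  obtain ⟨Mg, hMg0, hMg⟩ := T.memHp0_bound hg
  have hbdd : BddAbove (Set.range (T.Mp p h)) := by
    refine ⟨MB + Mg, ?_⟩
    rintro x ⟨n, rfl⟩
    exact le_trans (T.Mp_sub_le hp _ _ n) (add_le_add (hMB n) (hMg n))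
  have hle : T.Mp p h 0 ≤ T.Hnorm p h := le_ciSup hbdd 0
  -- compute Mp p h 0
  have hgamma0 : T.gamma 0 = 1 := by rw [gamma, T.levelFinset_zero]; simp
  have hMp0 : T.Mp p h 0 = ‖h T.root‖ := by
    unfold Mp Mpp
    rw [hgamma0, T.levelFinset_zero, Finset.sum_singleton]
    rw [Nat.cast_one, div_one, one_mul]
    exact rpow_inv_rpow' hp0 (norm_nonneg _)
  -- lower bound for ‖h root‖
  have hroot : h T.root = T.B^[N] f T.root - (A:ℂ) := by
    rw [hhdef]; simp [hgdef]
  have hBroot : ‖T.B^[N] f T.root‖ ≤ (b:ℝ) * (b:ℝ) * Mf := by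
    rw [T.B_iterate, T.nChildrenFinset_root]
    refine le_trans (norm_sum_le _ _) ?_
    set Sp : ℝ := ∑ w ∈ T.levelFinset N, ‖f w‖ ^ p with hSp
    have hSpnn : 0 ≤ Sp := T.sum_norm_rpow_nonneg f N
    have hterm : ∀ w ∈ T.levelFinset N, ‖f w‖ ≤ Sp ^ (1/p) := by
      intro w hw
      have h1 : ‖f w‖ ^ p ≤ Sp :=
        Finset.single_le_sum (f := fun w => ‖f w‖ ^ p)
          (fun w _ => Real.rpow_nonneg (norm_nonneg _) p) hw
      calc ‖f w‖ = (‖f w‖ ^ p) ^ (1/p) := (rpow_inv_rpow' hp0 (norm_nonneg _)).symm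
        _ ≤ Sp ^ (1/p) := Real.rpow_le_rpow (by positivity) h1 (by positivity)
    refine le_trans (Finset.sum_le_sum hterm) ?_
    rw [Finset.sum_const, nsmul_eq_mul]
    have hγ1 : (1:ℝ) ≤ (T.gamma N : ℝ) := by exact_mod_cast T.gamma_pos N
    have hSpeq : Sp = (T.gamma N : ℝ) * T.Mpp p f N := by
      rw [Mpp, ← mul_assoc, mul_one_div, div_self (by positivity), one_mul]
    have hSprpow : Sp ^ (1/p) ≤ (T.gamma N : ℝ) * T.Mp p f N := by
      rw [hSpeq, Real.mul_rpow (by positivity) (T.Mpp_nonneg f N)]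
      refine mul_le_mul_of_nonneg_right ?_ (T.Mp_nonneg f N)
      calc (T.gamma N : ℝ) ^ (1/p) ≤ (T.gamma N : ℝ) ^ (1:ℝ) :=
            Real.rpow_le_rpow_of_exponent_le hγ1
              (by rw [div_le_one hp0]; exact hp)
        _ = (T.gamma N : ℝ) := Real.rpow_one _
    calc (T.gamma N : ℝ) * Sp ^ (1/p)
        ≤ (T.gamma N : ℝ) * ((T.gamma N : ℝ) * T.Mp p f N) :=
          mul_le_mul_of_nonneg_left hSprpow (by positivity)
      _ ≤ (b:ℝ) * ((b:ℝ) * Mf) := by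
          have hγnn : (0:ℝ) ≤ (T.gamma N : ℝ) := Nat.cast_nonneg _
          have hbnn : (0:ℝ) ≤ (b:ℝ) := by linarith
          have inner : (T.gamma N:ℝ) * T.Mp p f N ≤ (b:ℝ) * Mf :=
            mul_le_mul (hbd N) (hMf N) (T.Mp_nonneg f N) hbnn
          exact mul_le_mul (hbd N) inner
            (mul_nonneg hγnn (T.Mp_nonneg f N)) hbnn
      _ = (b:ℝ) * (b:ℝ) * Mf := by ring
  have hlower : (2:ℝ) ≤ ‖h T.root‖ := by
    have h1 : ‖(A:ℂ)‖ - ‖T.B^[N] f T.root‖ ≤ ‖(A:ℂ) - T.B^[N] f T.root‖ :=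
      norm_sub_norm_le _ _
    have h2 : ‖(A:ℂ)‖ = A := by
      rw [Complex.norm_real]; exact abs_of_nonneg hA0
    have h3 : ‖(A:ℂ) - T.B^[N] f T.root‖ = ‖h T.root‖ := by
      rw [hroot, norm_sub_rev]
    rw [h2, h3] at h1
    have : A - ((b:ℝ) * (b:ℝ) * Mf) ≤ ‖h T.root‖ := by
      refine le_trans ?_ h1
      have := hBroot
      linarith
    rw [hA] at this
    linarith
  rw [hMp0] at hle
  linarith [hle.trans_lt hN]

end HTree
namespace HTree

variable (T : HTree)

lemma geo_range (n : ℕ) : ∑ j ∈ Finset.range n, ((2:ℝ)⁻¹) ^ j ≤ 2 := by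
  have h := geom_sum_eq (by norm_num : ((2:ℝ)⁻¹) ≠ 1) n
  rw [h]
  have hpow : (0:ℝ) ≤ ((2:ℝ)⁻¹) ^ n := by positivity
  have : ((2:ℝ)⁻¹) ^ n - 1 ≤ 0 := by
    have : ((2:ℝ)⁻¹) ^ n ≤ 1 := pow_le_one₀ (by norm_num) (by norm_num)
    linarith
  rw [div_le_iff_of_neg (by norm_num : ((2:ℝ)⁻¹) - 1 < 0)]
  nlinarith

lemma geo_Ico (a M : ℕ) : ∑ i ∈ Finset.Ico a M, ((2:ℝ)⁻¹) ^ i ≤ 2 * ((2:ℝ)⁻¹) ^ a := by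
  by_cases haM : a ≤ M
  · rw [Finset.sum_Ico_eq_sum_range]
    have : ∀ j, ((2:ℝ)⁻¹) ^ (a + j) = ((2:ℝ)⁻¹) ^ a * ((2:ℝ)⁻¹) ^ j := fun j => pow_add _ _ _
    rw [Finset.sum_congr rfl fun j _ => this j, ← Finset.mul_sum]
    rw [mul_comm (2:ℝ)]
    exact mul_le_mul_of_nonneg_left (geo_range _) (by positivity)
  · rw [Finset.Ico_eq_empty (by omega), Finset.sum_empty]
    positivity

lemma eta_bound {p : ℝ} (hp : 1 ≤ p) (i : ℕ) {S G : ℝ} (hS : 0 ≤ S)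
    (hG : ((2:ℝ)^i)^p * (S + 1) ≤ G) {F : T.V → ℂ} {r : ℕ}
    (hMpp : T.Mpp p F r ≤ S / G) : T.Mp p F r ≤ ((2:ℝ)⁻¹) ^ i := by
  have hp0 : (0:ℝ) < p := lt_of_lt_of_le one_pos hp
  set η : ℝ := ((2:ℝ)⁻¹) ^ i with hη
  have hη0 : (0:ℝ) ≤ η := by positivity
  have hC0 : (0:ℝ) < ((2:ℝ)^i)^p * (S + 1) := by
    refine mul_pos (Real.rpow_pos_of_pos (by positivity) p) (by linarith)
  have hG0 : (0:ℝ) < G := lt_of_lt_of_le hC0 hG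
  have hmul : η ^ p * ((2:ℝ)^i) ^ p = 1 := by
    rw [← Real.mul_rpow hη0 (by positivity)]
    rw [hη, ← mul_pow]
    norm_num
  have hkey : S / G ≤ η ^ p := by
    rw [div_le_iff₀ hG0]
    calc S ≤ S + 1 := by linarith
      _ = η ^ p * (((2:ℝ)^i)^p * (S + 1)) := by rw [← mul_assoc, hmul, one_mul]
      _ ≤ η ^ p * G := mul_le_mul_of_nonneg_left hG (Real.rpow_nonneg hη0 p)
  calc T.Mp p F r ≤ (S / G) ^ (1/p) := T.Mp_le_of_Mpp_le hp0 hMpp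
    _ ≤ (η ^ p) ^ (1/p) :=
        Real.rpow_le_rpow (div_nonneg hS hG0.le) hkey (by positivity)
    _ = η := rpow_inv_rpow' hp0 hη0

lemma Mpp_congr {p : ℝ} {f g : T.V → ℂ} {n : ℕ} (h : ∀ v, T.level v = n → f v = g v) :
    T.Mpp p f n = T.Mpp p g n := by
  unfold Mpp
  congr 1
  exact Finset.sum_congr rfl fun v hv => by rw [h v (T.mem_levelFinset.1 hv)]

lemma Mp_le_of_pointwise {p : ℝ} (hp : 0 < p) {f : T.V → ℂ} {r : ℕ} {ε : ℝ}
    (hε : 0 ≤ ε) (h : ∀ v, T.level v = r → ‖f v‖ ≤ ε) : T.Mp p f r ≤ ε := by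
  have h1 : T.Mpp p f r ≤ ε ^ p := by
    unfold Mpp
    have : ∑ v ∈ T.levelFinset r, ‖f v‖ ^ p ≤ ∑ _v ∈ T.levelFinset r, ε ^ p :=
      Finset.sum_le_sum fun v hv =>
        Real.rpow_le_rpow (norm_nonneg _) (h v (T.mem_levelFinset.1 hv)) hp.le
    refine le_trans (mul_le_mul_of_nonneg_left this (by positivity)) ?_
    rw [Finset.sum_const, nsmul_eq_mul]
    have hcard : ((T.levelFinset r).card : ℝ) = (T.gamma r : ℝ) := rfl
    have hγ : (T.gamma r : ℝ) ≠ 0 := by exact_mod_cast (T.gamma_pos r).ne'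
    rw [hcard, one_div, ← mul_assoc, inv_mul_cancel₀ hγ, one_mul]
  calc T.Mp p f r ≤ (ε ^ p) ^ (1/p) := T.Mp_le_of_Mpp_le hp h1
    _ = ε := rpow_inv_rpow' hp hε

/-- The countable dense set of finitely supported rational-valued functions. -/
def Dset : Set (T.V → ℂ) :=
  {h | (∃ d : ℕ, ∀ v, d < T.level v → h v = 0) ∧
       ∀ v, ∃ q : ℚ × ℚ, h v = (q.1 : ℂ) + (q.2 : ℂ) * Complex.I}

lemma finite_low (d : ℕ) : {v : T.V | T.level v ≤ d}.Finite := by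
  have heq : {v : T.V | T.level v ≤ d} = ⋃ j ∈ Set.Iic d, {v : T.V | T.level v = j} := by
    ext v
    simp only [Set.mem_setOf_eq, Set.mem_iUnion, Set.mem_Iic]
    exact ⟨fun h => ⟨T.level v, h, rfl⟩, fun ⟨j, hj, hv⟩ => hv ▸ hj⟩
  rw [heq]
  exact (Set.finite_Iic d).biUnion fun j _ => T.finite_level j

lemma Dset_countable : (T.Dset).Countable := by
  have hsub : T.Dset ⊆ ⋃ d : ℕ, {h : T.V → ℂ | (∀ v, d < T.level v → h v = 0) ∧
      ∀ v, ∃ q : ℚ × ℚ, h v = (q.1 : ℂ) + (q.2 : ℂ) * Complex.I} := by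
    rintro h ⟨⟨d, hd⟩, hq⟩
    exact Set.mem_iUnion.2 ⟨d, hd, hq⟩
  refine Set.Countable.mono hsub (Set.countable_iUnion fun d => ?_)
  haveI : Finite {v : T.V // T.level v ≤ d} := (T.finite_low d).to_subtype
  set Φ : ({v : T.V // T.level v ≤ d} → ℚ × ℚ) → (T.V → ℂ) := fun q v =>
    if hv : T.level v ≤ d then ((q ⟨v, hv⟩).1 : ℂ) + ((q ⟨v, hv⟩).2 : ℂ) * Complex.I
    else 0 with hΦ
  refine Set.Countable.mono ?_ (Set.countable_range Φ)
  rintro h ⟨hd, hq⟩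
  choose q hq using hq
  refine ⟨fun x => q x.1, funext fun v => ?_⟩
  show (if hv : T.level v ≤ d then ((q v).1 : ℂ) + ((q v).2 : ℂ) * Complex.I else 0) = h v
  by_cases hv : T.level v ≤ d
  · rw [dif_pos hv, ← hq v]
  · rw [dif_neg hv, hd v (by omega)]

lemma complex_rat_approx (z : ℂ) {δ : ℝ} (hδ : 0 < δ) :
    ∃ q : ℚ × ℚ, ‖z - ((q.1 : ℂ) + (q.2 : ℂ) * Complex.I)‖ ≤ δ := by
  obtain ⟨q1, hq1⟩ := exists_rat_near z.re (half_pos hδ)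
  obtain ⟨q2, hq2⟩ := exists_rat_near z.im (half_pos hδ)
  refine ⟨(q1, q2), ?_⟩
  set w : ℂ := z - ((q1 : ℂ) + (q2 : ℂ) * Complex.I) with hw
  have hre : w.re = z.re - q1 := by simp [hw]
  have him : w.im = z.im - q2 := by simp [hw]
  calc ‖w‖ ≤ |w.re| + |w.im| := by
        exact Complex.norm_le_abs_re_add_abs_im w
    _ ≤ δ/2 + δ/2 := by
        rw [hre, him]
        exact add_le_add (le_of_lt hq1) (le_of_lt hq2)
    _ = δ := by ring

/-- Density of `Dset` in `H^p_0`, levelwise. -/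
lemma dense_step {p : ℝ} (hp : 1 ≤ p) {g : T.V → ℂ} (hg : T.MemHp0 p g) {ε : ℝ}
    (hε : 0 < ε) : ∃ h ∈ T.Dset, ∀ r, T.Mp p (fun v => g v - h v) r ≤ ε := by
  have hp0 : (0:ℝ) < p := lt_of_lt_of_le one_pos hp
  obtain ⟨d0, hd0⟩ := Filter.eventually_atTop.1 (hg.eventually_lt_const hε)
  have happ : ∀ v : T.V, ∃ q : ℚ × ℚ,
      ‖g v - ((q.1 : ℂ) + (q.2 : ℂ) * Complex.I)‖ ≤ ε := fun v =>
    complex_rat_approx (g v) hε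
  choose q hq using happ
  set h : T.V → ℂ := fun v =>
    if T.level v ≤ d0 then ((q v).1 : ℂ) + ((q v).2 : ℂ) * Complex.I else 0 with hh
  refine ⟨h, ⟨⟨d0, fun v hv => by rw [hh]; simp only [if_neg (by omega : ¬ T.level v ≤ d0)]⟩,
    fun v => ?_⟩, fun r => ?_⟩
  · by_cases hv : T.level v ≤ d0
    · exact ⟨q v, by rw [hh]; simp only [if_pos hv]⟩
    · exact ⟨(0, 0), by rw [hh]; simp only [if_neg hv]; simp⟩
  · by_cases hr : r ≤ d0
    · refine T.Mp_le_of_pointwise hp0 hε.le fun v hv => ?_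
      rw [hh]
      simp only [if_pos (by omega : T.level v ≤ d0)]
      exact hq v
    · have : T.Mp p (fun v => g v - h v) r = T.Mp p g r := by
        refine T.Mp_congr fun v hv => ?_
        rw [hh]
        simp only [if_neg (by omega : ¬ T.level v ≤ d0), sub_zero]
      rw [this]
      exact (hd0 r (by omega)).le

end HTree
namespace HTree

lemma sufficiency (T : HTree) {p : ℝ} (hp : 1 ≤ p)
    (hleafless : ∀ v : T.V, T.numChildren v ≠ 0)
    (hgam : Filter.Tendsto (fun n : ℕ => T.gamma n) Filter.atTop Filter.atTop) :
    T.Hypercyclic T.B (T.MemHp0 p) p := by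
  have hp0 : (0:ℝ) < p := lt_of_lt_of_le one_pos hp
  -- enumeration of the countable dense set
  have hD0 : (fun _ => (0:ℂ)) ∈ T.Dset :=
    ⟨⟨0, fun v _ => rfl⟩, fun v => ⟨(0, 0), by simp⟩⟩
  obtain ⟨e, he⟩ := (T.Dset_countable).exists_eq_range ⟨_, hD0⟩
  set gs : ℕ → T.V → ℂ := fun k => e (Nat.unpair k).1 with hgs
  have hgD : ∀ k, gs k ∈ T.Dset := fun k => he ▸ Set.mem_range_self _
  have hd' : ∀ k, ∃ d : ℕ, ∀ v, d < T.level v → gs k v = 0 := fun k => (hgD k).1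
  choose ds hds using hd'
  set Sg : ℕ → ℝ := fun k =>
    ∑ j ∈ Finset.range (ds k + 1), ∑ u ∈ T.levelFinset j, ‖gs k u‖ ^ p with hSgdef
  have hSgnn : ∀ k, 0 ≤ Sg k := fun k =>
    Finset.sum_nonneg fun j _ => T.sum_norm_rpow_nonneg _ j
  set Cs : ℕ → ℝ := fun k => ((2:ℝ)^k)^p * (Sg k + 1) with hCs
  have hre : Filter.Tendsto (fun n : ℕ => (T.gamma n : ℝ)) Filter.atTop Filter.atTop :=
    tendsto_natCast_atTop_atTop.comp hgam
  have hM' : ∀ k, ∃ M : ℕ, ∀ r, M ≤ r → Cs k ≤ (T.gamma r : ℝ) := fun k =>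
    Filter.eventually_atTop.1 (hre.eventually_ge_atTop (Cs k))
  choose Ms hMs using hM'
  set ms : ℕ → ℕ := fun k => max (ds (k-1) + 1) (Ms k) with hms
  set ns : ℕ → ℕ := fun k => ∑ i ∈ Finset.range (k+1), ms i with hns
  have hm1 : ∀ k, 1 ≤ ms k := fun k => le_trans (by omega) (le_max_left _ _)
  have hms_le_ns : ∀ k, ms k ≤ ns k := fun k =>
    Finset.single_le_sum (f := ms) (fun i _ => Nat.zero_le _)
      (Finset.mem_range.2 (by omega))
  have hnmono : Monotone ns := fun a b hab =>
    Finset.sum_le_sum_of_subset (Finset.range_subset_range.2 (by omega))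
  have hstep : ∀ j k, j < k → ns j + ms k ≤ ns k := by
    intro j k hjk
    have h1 : ns k = ns (k-1) + ms k := by
      rw [hns]
      simp only
      rw [show k + 1 = (k-1) + 1 + 1 by omega, Finset.sum_range_succ,
        show k - 1 + 1 = k by omega]
    rw [h1]
    exact add_le_add_left (hnmono (by omega)) _
  have hsupp : ∀ j k, j < k → ns j + ds j < ns k := by
    intro j k hjk
    have h2 : ds j + 1 ≤ ms (j+1) := by
      have := le_max_left (ds ((j+1)-1) + 1) (Ms (j+1))
      simpa [hms] using this
    have h3 : ns (j+1) ≤ ns k := hnmono (by omega)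
    have h4 := hstep j (j+1) (by omega)
    omega
  have hklt : ∀ k, k < ns k := by
    intro k
    have h1 : ∑ _i ∈ Finset.range (k+1), 1 ≤ ∑ i ∈ Finset.range (k+1), ms i :=
      Finset.sum_le_sum fun i _ => hm1 i
    simpa [hns] using h1
  have hγns : ∀ k, Cs k ≤ (T.gamma (ns k) : ℝ) := by
    intro k
    refine le_trans (hMs k (ms k) (le_max_right _ _)) ?_
    exact Nat.cast_le.2 (T.gamma_mono hleafless (hms_le_ns k))
  have hγgap : ∀ j k, j < k → Cs k ≤ (T.gamma (ns k - ns j) : ℝ) := by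
    intro j k hjk
    refine le_trans (hMs k (ms k) (le_max_right _ _)) ?_
    have hle : ms k ≤ ns k - ns j := by have := hstep j k hjk; omega
    exact Nat.cast_le.2 (T.gamma_mono hleafless hle)
  set ts : ℕ → T.V → ℂ := fun i => T.Tm (ns i) (gs i) with hts
  set f : T.V → ℂ := fun v => ∑ i ∈ Finset.range (T.level v + 1), ts i v with hf
  set η : ℕ → ℝ := fun i => ((2:ℝ)⁻¹)^i with hη
  have hMp_t : ∀ i r, T.Mp p (ts i) r ≤ η i := by
    intro i r
    have hcb := T.cross_bound hleafless hp 0 (ns i) (ds i) (Nat.zero_le _)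
      (gs i) (hds i) r
    rw [Nat.sub_zero] at hcb
    have heq : T.Mpp p (ts i) r
        = T.Mpp p (fun v => ∑ w ∈ T.nChildrenFinset 0 v, T.Tm (ns i) (gs i) w) r := by
      refine T.Mpp_congr fun v _ => ?_
      rw [T.nChildrenFinset_zero, Finset.sum_singleton]
    exact T.eta_bound hp i (hSgnn i) (hγns i) (by rw [heq]; exact hcb)
  have hMp_cross : ∀ k i r, k < i →
      T.Mp p (fun v => ∑ w ∈ T.nChildrenFinset (ns k) v, ts i w) r ≤ η i := by
    intro k i r hki
    have hcb := T.cross_bound hleafless hp (ns k) (ns i) (ds i)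
      (hnmono (le_of_lt hki)) (gs i) (hds i) r
    exact T.eta_bound hp i (hSgnn i) (hγgap k i hki) hcb
  have hts_zero : ∀ i (w : T.V), ns i + ds i < T.level w → ts i w = 0 := fun i w h =>
    T.Tm_eq_zero_of_gt (hds i) h
  -- membership of f in H^p_0
  have hf_le : ∀ k r, ns k ≤ r → T.Mp p f r ≤ 2 * η k := by
    intro k r hkr
    have hkr1 : k ≤ r + 1 := by have := hklt k; omega
    have h1 : T.Mp p f r = T.Mp p (fun v => ∑ i ∈ Finset.range (r+1), ts i v) r :=
      T.Mp_congr fun v hv => by rw [hf]; simp only; rw [hv]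
    rw [h1]
    refine le_trans (T.Mp_sum_le hp _ _ r) ?_
    rw [← Finset.sum_range_add_sum_Ico _ hkr1]
    have hz : ∀ i ∈ Finset.range k, T.Mp p (ts i) r = 0 := by
      intro i hi
      refine T.Mp_eq_zero_of_zero hp0 fun v hv => ?_
      refine hts_zero i v ?_
      have := hsupp i k (Finset.mem_range.1 hi)
      omega
    rw [Finset.sum_congr rfl hz, Finset.sum_const, smul_zero, zero_add]
    calc ∑ i ∈ Finset.Ico k (r+1), T.Mp p (ts i) r
        ≤ ∑ i ∈ Finset.Ico k (r+1), ((2:ℝ)⁻¹)^i :=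
          Finset.sum_le_sum fun i _ => hMp_t i r
      _ ≤ 2 * ((2:ℝ)⁻¹)^k := geo_Ico k (r+1)
  have hfmem : T.MemHp0 p f := by
    rw [MemHp0, Metric.tendsto_atTop]
    intro ε hε
    obtain ⟨k, hk⟩ := exists_pow_lt_of_lt_one (half_pos hε) (by norm_num : (2:ℝ)⁻¹ < 1)
    refine ⟨ns k, fun r hr => ?_⟩
    rw [Real.dist_eq, sub_zero, abs_of_nonneg (T.Mp_nonneg f r)]
    calc T.Mp p f r ≤ 2 * η k := hf_le k r hr
      _ < ε := by rw [hη]; simp only; linarith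
  -- expansion of B^[N] f
  have hBNf : ∀ (N : ℕ) (v : T.V), T.B^[N] f v
      = ∑ i ∈ Finset.range (T.level v + N + 1),
          ∑ w ∈ T.nChildrenFinset N v, ts i w := by
    intro N v
    rw [T.B_iterate]
    have h1 : ∀ w ∈ T.nChildrenFinset N v,
        f w = ∑ i ∈ Finset.range (T.level v + N + 1), ts i w := by
      intro w hw
      rw [hf]; simp only; rw [(T.mem_nChildrenFinset.1 hw).1]
    rw [Finset.sum_congr rfl h1, Finset.sum_comm]
  -- final verification
  refine ⟨f, hfmem, ?_⟩
  intro gt hgt ε hε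
  have hε3 : 0 < ε/3 := by linarith
  obtain ⟨h, hhD, hhapp⟩ := T.dense_step hp hgt hε3
  obtain ⟨j, hj⟩ : h ∈ Set.range e := he ▸ hhD
  obtain ⟨t, ht⟩ := exists_pow_lt_of_lt_one hε3 (by norm_num : (2:ℝ)⁻¹ < 1)
  set k := Nat.pair j t with hk
  have hgk : gs k = h := by rw [hgs]; simp only [hk, Nat.unpair_pair]; exact hj
  have hηk : η k < ε/3 := by
    refine lt_of_le_of_lt ?_ ht
    exact pow_le_pow_of_le_one (by norm_num) (by norm_num) (Nat.right_le_pair j t)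
  refine ⟨ns k, ?_⟩
  have hbound : ∀ r, T.Mp p (fun v => T.B^[ns k] f v - gt v) r ≤ ε/3 + (ε/3 + η k) := by
    intro r
    set N := ns k with hN
    have hk1 : k + 1 ≤ r + N + 1 := by have := hklt k; omega
    -- decomposition at level r
    have hdec : ∀ v, T.level v = r → T.B^[N] f v - gt v
        = (gs k v - gt v) + ∑ i ∈ Finset.Ico (k+1) (r + N + 1),
            ∑ w ∈ T.nChildrenFinset N v, ts i w := by
      intro v hv
      rw [hBNf N v, hv]
      rw [← Finset.sum_range_add_sum_Ico _ hk1, Finset.sum_range_succ]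
      have hz : ∀ i ∈ Finset.range k,
          ∑ w ∈ T.nChildrenFinset N v, ts i w = 0 := by
        intro i hi
        refine Finset.sum_eq_zero fun w hw => ?_
        refine hts_zero i w ?_
        have hlw := (T.mem_nChildrenFinset.1 hw).1
        have := hsupp i k (Finset.mem_range.1 hi)
        omega
      rw [Finset.sum_congr rfl hz, Finset.sum_const, smul_zero, zero_add]
      have hmain : ∑ w ∈ T.nChildrenFinset N v, ts k w = gs k v := by
        rw [hts]; simp only
        rw [← T.B_iterate N (T.Tm (ns k) (gs k)) v]
        exact T.B_iterate_Tm hleafless (ns k) (gs k) v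
      rw [hmain]
      ring
    have heq : T.Mp p (fun v => T.B^[ns k] f v - gt v) r
        = T.Mp p (fun v => (gs k v - gt v) + ∑ i ∈ Finset.Ico (k+1) (r + N + 1),
            ∑ w ∈ T.nChildrenFinset N v, ts i w) r :=
      T.Mp_congr fun v hv => hdec v hv
    rw [heq]
    refine le_trans (T.Mp_add_le hp _ _ r) ?_
    refine add_le_add ?_ ?_
    · -- ‖gs k - gt‖ ≤ ε/3
      have h1 : T.Mp p (fun v => gs k v - gt v) r
          = T.Mp p (fun v => gt v - h v) r := by
        rw [hgk]
        have h2 := T.Mp_neg (p := p) (f := fun v => gt v - h v) r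
        simp only [neg_sub] at h2
        exact h2
      rw [h1]
      exact hhapp r
    · calc T.Mp p (fun v => ∑ i ∈ Finset.Ico (k+1) (r + N + 1),
            ∑ w ∈ T.nChildrenFinset N v, ts i w) r
          ≤ ∑ i ∈ Finset.Ico (k+1) (r + N + 1),
              T.Mp p (fun v => ∑ w ∈ T.nChildrenFinset N v, ts i w) r :=
            T.Mp_sum_le hp _ _ r
        _ ≤ ∑ i ∈ Finset.Ico (k+1) (r + N + 1), ((2:ℝ)⁻¹)^i :=
            Finset.sum_le_sum fun i hi =>
              hMp_cross k i r (by have := (Finset.mem_Ico.1 hi).1; omega)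
        _ ≤ 2 * ((2:ℝ)⁻¹)^(k+1) := geo_Ico (k+1) (r + N + 1)
        _ = ε/3 + η k - ε/3 := by rw [hη]; simp only; rw [pow_succ]; ring
        _ ≤ ε/3 + η k := by linarith
  refine lt_of_le_of_lt (ciSup_le hbound) ?_
  linarith

end HTree

/-- on a leafless tree, the backward shift is hypercyclic on `H^p_0(T)`
if and only if `γ(n) → ∞`. -/
theorem backward_shift_hypercyclic_iff (T : HTree) (p : ℝ) (hp : 1 ≤ p)
    (hleafless : ∀ v : T.V, T.numChildren v ≠ 0)
    (hb : T.BoundedOn T.B (T.MemHp0 p) p) :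
    T.Hypercyclic T.B (T.MemHp0 p) p ↔
      Filter.Tendsto (fun n : ℕ => T.gamma n) Filter.atTop Filter.atTop := by
  exact ⟨fun hcyc => T.necessity hp hleafless hb hcyc,
    fun hgam => T.sufficiency hp hleafless hgam⟩
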